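/- For every integer d ≥ 1, setting c(d) = ∑_{j=0}^{d} C(d,j)·b(j)/2^{d−j}, there exists a polynomial q with real coefficients such that for every integer n ≥ 0, ∑_{k=0}^{n−1} (k^d − c(d))·4^k·k!/(2k)! = q(n)·4^n·n!/(2n)! − q(0). (Note that 4^k·k!/(2k)! = 1/(1/2)^{(k)}, where a^{(k)} = a(a+1)⋯(a+k−1) is the rising factorial.) -/

import Mathlib

/-- The Bell numbers: `bell 0 = 1` and `bell (d+1) = ∑_{j=0}^{d} C(d,j) * bell j`. -/
def bell : ℕ → ℕ
  | 0 => 1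
  | d + 1 => ∑ j ∈ (Finset.range (d + 1)).attach, Nat.choose d j.1 * bell j.1
  decreasing_by exact Finset.mem_range.mp j.2

lemma bell_succ (n : ℕ) :
    bell (n + 1) = ∑ j ∈ Finset.range (n + 1), Nat.choose n j * bell j := by
  rw [bell]
  exact Finset.sum_attach (Finset.range (n+1)) (fun j => Nat.choose n j * bell j)

noncomputable def mm : ℕ → ℝ :=
  fun n => ∑ j ∈ Finset.range (n + 1),
    (Nat.choose n j : ℝ) * (bell j : ℝ) * (-(1/2 : ℝ)) ^ (n - j)

lemma keyK (f : ℕ → ℝ) (a b : ℝ) (n : ℕ) :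
    ∑ j ∈ Finset.range (n+1), (Nat.choose n j : ℝ) *
      (∑ i ∈ Finset.range (j+1), (Nat.choose j i : ℝ) * f i * a ^ (j - i)) * b ^ (n - j)
    = ∑ i ∈ Finset.range (n+1), (Nat.choose n i : ℝ) * f i * (a + b) ^ (n - i) := by
  have h1 : ∀ j ∈ Finset.range (n+1), (Nat.choose n j : ℝ) *
      (∑ i ∈ Finset.range (j+1), (Nat.choose j i : ℝ) * f i * a ^ (j - i)) * b ^ (n - j)
      = ∑ i ∈ Finset.range (j+1),
          (Nat.choose n j : ℝ) * (Nat.choose j i : ℝ) * f i * a ^ (j - i) * b ^ (n - j) := by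
    intro j _
    rw [Finset.mul_sum, Finset.sum_mul]
    exact Finset.sum_congr rfl fun i _ => by ring
  rw [Finset.sum_congr rfl h1]
  rw [Finset.sum_comm' (t' := Finset.range (n+1)) (s' := fun i => Finset.Ico i (n+1))
    (fun j i => by simp [Finset.mem_range, Finset.mem_Ico]; omega)]
  refine Finset.sum_congr rfl fun i hi => ?_
  have hin : i ≤ n := by simpa [Nat.lt_succ_iff] using hi
  rw [Finset.sum_Ico_eq_sum_range]
  have hsum : ∀ t ∈ Finset.range (n + 1 - i),
      (Nat.choose n (i + t) : ℝ) * (Nat.choose (i + t) i : ℝ) * f i * a ^ (i + t - i)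
        * b ^ (n - (i + t))
      = (Nat.choose n i : ℝ) * f i * ((Nat.choose (n - i) t : ℝ) * (a ^ t * b ^ (n - i - t))) := by
    intro t ht
    have htn : i + t ≤ n := by simp [Finset.mem_range] at ht; omega
    have hc : (Nat.choose n (i + t) : ℝ) * (Nat.choose (i + t) i : ℝ)
        = (Nat.choose n i : ℝ) * (Nat.choose (n - i) t : ℝ) := by
      have hn : Nat.choose n (i+t) * Nat.choose (i+t) i
          = Nat.choose n i * Nat.choose (n-i) t := by
        rw [Nat.choose_mul (Nat.le_add_right i t), Nat.add_sub_cancel_left]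
      rw [← Nat.cast_mul, hn, Nat.cast_mul]
    have h2 : i + t - i = t := by omega
    have h3 : n - (i + t) = n - i - t := by omega
    rw [hc, h2, h3]; ring
  rw [Finset.sum_congr rfl hsum, ← Finset.mul_sum]
  congr 1
  rw [add_pow]
  have : n + 1 - i = (n - i) + 1 := by omega
  rw [this]
  exact (Finset.sum_congr rfl fun t _ => by ring).symm

lemma lemA (n : ℕ) :
    ∑ j ∈ Finset.range (n + 1), (Nat.choose n j : ℝ) * mm j
    = ∑ j ∈ Finset.range (n + 1), (Nat.choose n j : ℝ) * (bell j : ℝ) * (1/2 : ℝ) ^ (n - j) := by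
  have := keyK (fun i => (bell i : ℝ)) (-(1/2 : ℝ)) 1 n
  simp only [one_pow, mul_one] at this
  rw [show ∑ j ∈ Finset.range (n + 1), (Nat.choose n j : ℝ) * mm j
      = ∑ j ∈ Finset.range (n+1), (Nat.choose n j : ℝ) *
        (∑ i ∈ Finset.range (j+1), (Nat.choose j i : ℝ) * (bell i : ℝ) * (-(1/2:ℝ)) ^ (j - i))
      from Finset.sum_congr rfl fun j _ => by rw [mm], this]
  norm_num

lemma pascal_sum (g : ℕ → ℝ) (n : ℕ) :
    ∑ j ∈ Finset.range (n + 2), (Nat.choose (n+1) j : ℝ) * g j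
    = ∑ j ∈ Finset.range (n + 1), (Nat.choose n j : ℝ) * g j
      + ∑ j ∈ Finset.range (n + 1), (Nat.choose n j : ℝ) * g (j + 1) := by
  rw [Finset.sum_range_succ' (fun j => (Nat.choose (n+1) j : ℝ) * g j)]
  have : ∀ j ∈ Finset.range (n + 1), (Nat.choose (n+1) (j+1) : ℝ) * g (j+1)
      = (Nat.choose n j : ℝ) * g (j+1) + (Nat.choose n (j+1) : ℝ) * g (j+1) := by
    intro j _
    rw [Nat.choose_succ_succ]
    push_cast
    ring
  rw [Finset.sum_congr rfl this, Finset.sum_add_distrib]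
  have h2 : ∑ j ∈ Finset.range (n+1), (Nat.choose n (j+1) : ℝ) * g (j+1)
      + (Nat.choose n 0 : ℝ) * g 0
      = ∑ j ∈ Finset.range (n+2), (Nat.choose n j : ℝ) * g j :=
    (Finset.sum_range_succ' (fun j => (Nat.choose n j : ℝ) * g j) (n+1)).symm
  have h3 : ∑ j ∈ Finset.range (n+2), (Nat.choose n j : ℝ) * g j
      = ∑ j ∈ Finset.range (n+1), (Nat.choose n j : ℝ) * g j := by
    rw [Finset.sum_range_succ]
    simp
  rw [h3] at h2
  simp only [Nat.choose_zero_right, Nat.cast_one, one_mul] at h2 ⊢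
  linarith

lemma mm_rec (n : ℕ) :
    mm (n + 1) = (∑ j ∈ Finset.range (n + 1), (Nat.choose n j : ℝ) * mm j) - mm n / 2 := by
  have e1 : mm (n+1) = ∑ j ∈ Finset.range (n + 2),
      (Nat.choose (n+1) j : ℝ) * ((bell j : ℝ) * (-(1/2:ℝ)) ^ (n + 1 - j)) := by
    rw [mm]; exact Finset.sum_congr rfl fun j _ => by ring
  rw [e1, pascal_sum]
  have e2 : ∑ j ∈ Finset.range (n + 1),
      (Nat.choose n j : ℝ) * ((bell j : ℝ) * (-(1/2:ℝ)) ^ (n + 1 - j)) = -(1/2) * mm n := by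
    rw [mm, Finset.mul_sum]
    refine Finset.sum_congr rfl fun j hj => ?_
    have hjn : j ≤ n := by simpa [Nat.lt_succ_iff] using hj
    have : n + 1 - j = (n - j) + 1 := by omega
    rw [this, pow_succ]
    ring
  have e3 : ∑ j ∈ Finset.range (n + 1),
      (Nat.choose n j : ℝ) * ((bell (j+1) : ℝ) * (-(1/2:ℝ)) ^ (n + 1 - (j+1))) =
      ∑ j ∈ Finset.range (n + 1), (Nat.choose n j : ℝ) * mm j := by
    have hb : ∀ j ∈ Finset.range (n+1), (Nat.choose n j : ℝ) *
        ((bell (j+1) : ℝ) * (-(1/2:ℝ)) ^ (n + 1 - (j+1)))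
        = (Nat.choose n j : ℝ) *
          (∑ i ∈ Finset.range (j+1), (Nat.choose j i : ℝ) * (bell i : ℝ) * (1:ℝ) ^ (j - i))
          * (-(1/2:ℝ)) ^ (n - j) := by
      intro j _
      have : (bell (j+1) : ℝ) = ∑ i ∈ Finset.range (j+1),
          (Nat.choose j i : ℝ) * (bell i : ℝ) * (1:ℝ) ^ (j - i) := by
        rw [bell_succ]
        push_cast
        exact Finset.sum_congr rfl fun i _ => by ring
      rw [this]
      have h4 : n + 1 - (j + 1) = n - j := by omega
      rw [h4]; ring
    rw [Finset.sum_congr rfl hb, keyK, lemA]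
    refine Finset.sum_congr rfl fun j _ => ?_
    norm_num
  rw [e2, e3]
  ring

lemma mm_zero : mm 0 = 1 := by simp [mm, bell]

lemma binsum (x : ℝ) (j : ℕ) :
    ∑ i ∈ Finset.range (j+1), (Nat.choose j i : ℝ) * x ^ i = (x + 1) ^ j := by
  rw [add_pow]
  exact Finset.sum_congr rfl fun i _ => by ring

lemma L3 : ∀ j : ℕ, ∃ u : Polynomial ℝ, ∀ x : ℝ,
    2 * u.eval (x + 1) - (2 * x + 1) * u.eval x = x ^ j - mm j := by
  intro j
  induction j using Nat.strong_induction_on with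
  | _ j ih =>
    match j, ih with
    | 0, _ => exact ⟨0, fun x => by simp [mm_zero]⟩
    | j + 1, ih =>
      have hUe : ∀ i, ∃ u : Polynomial ℝ, i < j + 1 → ∀ x : ℝ,
          2 * u.eval (x + 1) - (2 * x + 1) * u.eval x = x ^ i - mm i := by
        intro i
        by_cases h : i < j + 1
        · obtain ⟨u, hu⟩ := ih i h
          exact ⟨u, fun _ => hu⟩
        · exact ⟨0, fun h' => absurd h' h⟩
      choose U hUs using hUe
      refine ⟨Polynomial.C (-(1/2 : ℝ)) * Polynomial.X ^ j
        + (∑ i ∈ Finset.range (j+1), (Nat.choose j i : ℝ) • U i)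
        - (1/2 : ℝ) • U j, fun x => ?_⟩
      simp only [Polynomial.eval_add, Polynomial.eval_sub, Polynomial.eval_mul,
        Polynomial.eval_C, Polynomial.eval_pow, Polynomial.eval_X,
        Polynomial.eval_finset_sum, Polynomial.eval_smul, smul_eq_mul]
      have hj := hUs j (Nat.lt_succ_self j) x
      have hs : ∑ i ∈ Finset.range (j+1),
          ((Nat.choose j i : ℝ) * (2 * (U i).eval (x+1) - (2*x+1) * (U i).eval x))
          = ∑ i ∈ Finset.range (j+1), (Nat.choose j i : ℝ) * (x ^ i - mm i) :=
        Finset.sum_congr rfl fun i hi => by rw [hUs i (Finset.mem_range.mp hi) x]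
      have hL : ∑ i ∈ Finset.range (j+1),
          ((Nat.choose j i : ℝ) * (2 * (U i).eval (x+1) - (2*x+1) * (U i).eval x))
          = 2 * (∑ i ∈ Finset.range (j+1), (Nat.choose j i : ℝ) * (U i).eval (x+1))
            - (2*x+1) * (∑ i ∈ Finset.range (j+1), (Nat.choose j i : ℝ) * (U i).eval x) := by
        rw [Finset.mul_sum, Finset.mul_sum, ← Finset.sum_sub_distrib]
        exact Finset.sum_congr rfl fun i _ => by ring
      have hR : ∑ i ∈ Finset.range (j+1), (Nat.choose j i : ℝ) * (x ^ i - mm i)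
          = (x+1) ^ j - (mm (j+1) + mm j / 2) := by
        have : ∑ i ∈ Finset.range (j+1), (Nat.choose j i : ℝ) * (x ^ i - mm i)
            = (∑ i ∈ Finset.range (j+1), (Nat.choose j i : ℝ) * x ^ i)
              - ∑ i ∈ Finset.range (j+1), (Nat.choose j i : ℝ) * mm i := by
          rw [← Finset.sum_sub_distrib]
          exact Finset.sum_congr rfl fun i _ => by ring
        rw [this, binsum, mm_rec]
        ring
      have hsum' : 2 * (∑ i ∈ Finset.range (j+1), (Nat.choose j i : ℝ) * (U i).eval (x+1))
            - (2*x+1) * (∑ i ∈ Finset.range (j+1), (Nat.choose j i : ℝ) * (U i).eval x)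
          = (x+1) ^ j - (mm (j+1) + mm j / 2) := by
        rw [← hL, hs, hR]
      linear_combination hsum' - (1/2 : ℝ) * hj

lemma main_ex (d : ℕ) : ∃ q : Polynomial ℝ, ∀ x : ℝ,
    2 * q.eval (x + 1) - (2 * x + 1) * q.eval x
      = (2 * x + 1) * (x ^ d - ∑ j ∈ Finset.range (d+1), (Nat.choose d j : ℝ) * mm j) := by
  choose U hU using L3
  set c : ℝ := ∑ j ∈ Finset.range (d+1), (Nat.choose d j : ℝ) * mm j with hcdef
  refine ⟨Polynomial.C c - Polynomial.X ^ d
    + ∑ j ∈ Finset.range (d+1), ((2 * (Nat.choose d j : ℝ)) • U j), fun x => ?_⟩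
  simp only [Polynomial.eval_add, Polynomial.eval_sub, Polynomial.eval_mul,
    Polynomial.eval_C, Polynomial.eval_pow, Polynomial.eval_X,
    Polynomial.eval_finset_sum, Polynomial.eval_smul, smul_eq_mul]
  have hs : ∑ j ∈ Finset.range (d+1),
      ((Nat.choose d j : ℝ) * (2 * (U j).eval (x+1) - (2*x+1) * (U j).eval x))
      = ∑ j ∈ Finset.range (d+1), (Nat.choose d j : ℝ) * (x ^ j - mm j) :=
    Finset.sum_congr rfl fun j _ => by rw [hU j x]
  have hL : ∑ j ∈ Finset.range (d+1),
      ((Nat.choose d j : ℝ) * (2 * (U j).eval (x+1) - (2*x+1) * (U j).eval x))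
      = 2 * (∑ j ∈ Finset.range (d+1), (Nat.choose d j : ℝ) * (U j).eval (x+1))
        - (2*x+1) * (∑ j ∈ Finset.range (d+1), (Nat.choose d j : ℝ) * (U j).eval x) := by
    rw [Finset.mul_sum, Finset.mul_sum, ← Finset.sum_sub_distrib]
    exact Finset.sum_congr rfl fun j _ => by ring
  have hR : ∑ j ∈ Finset.range (d+1), (Nat.choose d j : ℝ) * (x ^ j - mm j)
      = (x+1) ^ d - c := by
    rw [hcdef, ← binsum x d, ← Finset.sum_sub_distrib]
    exact Finset.sum_congr rfl fun j _ => by ring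
  have hsum' : 2 * (∑ j ∈ Finset.range (d+1), (Nat.choose d j : ℝ) * (U j).eval (x+1))
        - (2*x+1) * (∑ j ∈ Finset.range (d+1), (Nat.choose d j : ℝ) * (U j).eval x)
      = (x+1) ^ d - c := by rw [← hL, hs, hR]
  have e1 : ∑ j ∈ Finset.range (d+1), 2 * (Nat.choose d j : ℝ) * (U j).eval (x+1)
      = 2 * ∑ j ∈ Finset.range (d+1), (Nat.choose d j : ℝ) * (U j).eval (x+1) := by
    rw [Finset.mul_sum]; exact Finset.sum_congr rfl fun j _ => by ring
  have e2 : ∑ j ∈ Finset.range (d+1), 2 * (Nat.choose d j : ℝ) * (U j).eval x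
      = 2 * ∑ j ∈ Finset.range (d+1), (Nat.choose d j : ℝ) * (U j).eval x := by
    rw [Finset.mul_sum]; exact Finset.sum_congr rfl fun j _ => by ring
  rw [e1, e2]
  linear_combination 2 * hsum'

theorem stmt_19 (d : ℕ) (hd : 1 ≤ d) :
    ∃ q : Polynomial ℝ, ∀ n : ℕ,
      ∑ k ∈ Finset.range n,
          (((k : ℝ) ^ d -
              ∑ j ∈ Finset.range (d + 1),
                (Nat.choose d j : ℝ) * (bell j : ℝ) / 2 ^ (d - j)) *
            4 ^ k * (Nat.factorial k : ℝ) / (Nat.factorial (2 * k) : ℝ)) =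
        q.eval (n : ℝ) * 4 ^ n * (Nat.factorial n : ℝ) / (Nat.factorial (2 * n) : ℝ) -
          q.eval 0 := by
  obtain ⟨q, hq⟩ := main_ex d
  have hc : (∑ j ∈ Finset.range (d + 1),
        (Nat.choose d j : ℝ) * (bell j : ℝ) / 2 ^ (d - j))
      = ∑ j ∈ Finset.range (d + 1), (Nat.choose d j : ℝ) * mm j := by
    rw [lemA]
    refine Finset.sum_congr rfl fun j _ => ?_
    rw [div_pow, one_pow]
    ring
  refine ⟨q, fun n => ?_⟩
  induction n with
  | zero => simp
  | succ n ihn =>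
    rw [Finset.sum_range_succ, ihn, hc]
    have h2 : (2*(n+1)).factorial = (2*n+1+1) * ((2*n+1) * (2*n).factorial) := by
      have h : 2*(n+1) = 2*n+1+1 := by ring
      rw [h, Nat.factorial_succ, Nat.factorial_succ]
    have f1 : ((2*n).factorial : ℝ) ≠ 0 := Nat.cast_ne_zero.mpr (Nat.factorial_ne_zero _)
    have f2 : (2*(n:ℝ)+1) ≠ 0 := by positivity
    have f3 : (2*(n:ℝ)+1+1) ≠ 0 := by positivity
    have key := hq (n : ℝ)
    have keystep :
        ((n:ℝ) ^ d - ∑ j ∈ Finset.range (d + 1), (Nat.choose d j : ℝ) * mm j) * 4 ^ n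
            * (n.factorial : ℝ) / ((2*n).factorial : ℝ)
        = q.eval ((n:ℝ)+1) * 4 ^ (n+1) * (((n:ℝ)+1) * (n.factorial:ℝ))
            / ((2*(n:ℝ)+1+1) * ((2*(n:ℝ)+1) * ((2*n).factorial : ℝ)))
          - q.eval (n:ℝ) * 4 ^ n * (n.factorial:ℝ) / ((2*n).factorial : ℝ) := by
      field_simp
      linear_combination (-(2*(n:ℝ)+2) * 4^n) * key
    rw [h2, Nat.factorial_succ]
    push_cast
    linarith [keystep]
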